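/- Let σ ∈ (1/2, 1) and let u : ℝ → ℂ be a Schwartz function, not identically zero, whose Fourier transform û is an even function. Then ∫_ℝ p₁(ξ)|û(ξ)|² dξ < ∫_ℝ |ξ|^{2σ}|û(ξ)|² dξ. (Equivalently, ‖𝒫₁^{1/2}u‖_{L²}² = c‖|∇|^σ u‖_{L²}² for some c ∈ (0,1) depending on u.) -/

import Mathlib

open MeasureTheory Real FourierTransform

/-- The symbol `p₁(ξ) = |ξ+1|^{2σ} − 1 − 2σξ` of the operator `𝒫₁`. -/
noncomputable def pOne (σ : ℝ) (ξ : ℝ) : ℝ := |ξ + 1| ^ (2*σ) - 1 - 2*σ*ξ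

lemma aux_rpow_add_one_lt {s x : ℝ} (hs0 : 0 < s) (hs1 : s < 1) (hx : 0 < x) :
    (x + 1) ^ s < x ^ s + 1 := by
  have hcc := Real.strictConcaveOn_rpow hs0 hs1
  have h0 : (0:ℝ) ∈ Set.Ici (0:ℝ) := Set.mem_Ici.2 le_rfl
  have hx1 : x + 1 ∈ Set.Ici (0:ℝ) := by simp; positivity
  have hne : (0:ℝ) ≠ x + 1 := by linarith
  have hxp : 0 < x + 1 := by linarith
  have ha : 0 < x / (x+1) := by positivity
  have hb : 0 < 1 / (x+1) := by positivity
  have hab : 1/(x+1) + x/(x+1) = 1 := by field_simp; ring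
  have hab' : x/(x+1) + 1/(x+1) = 1 := by field_simp
  have h1 := hcc.2 h0 hx1 hne hb ha hab
  have h2 := hcc.2 h0 hx1 hne ha hb hab'
  simp only [smul_eq_mul, mul_zero, zero_add, Real.zero_rpow hs0.ne'] at h1 h2
  have e1 : x/(x+1) * (x+1) = x := by field_simp
  have e2 : 1/(x+1) * (x+1) = 1 := by field_simp
  rw [e1] at h1
  rw [e2] at h2
  rw [Real.one_rpow] at h2
  have hsum : x/(x+1) * ((x+1)^s) + 1/(x+1) * ((x+1)^s) = (x+1)^s := by
    rw [← add_mul, hab', one_mul]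
  linarith

lemma aux_midpoint_rpow {s X Y : ℝ} (hs0 : 0 ≤ s) (hs1 : s ≤ 1) (hX : 0 ≤ X) (hY : 0 ≤ Y) :
    X ^ s + Y ^ s ≤ 2 * ((X + Y) / 2) ^ s := by
  have hcc := Real.concaveOn_rpow hs0 hs1
  have h := hcc.2 (Set.mem_Ici.2 hX) (Set.mem_Ici.2 hY)
    (by norm_num : (0:ℝ) ≤ 1/2) (by norm_num : (0:ℝ) ≤ 1/2) (by norm_num)
  simp only [smul_eq_mul] at h
  have e : (1/2 : ℝ) * X + (1/2) * Y = (X + Y)/2 := by ring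
  rw [e] at h
  linarith

lemma aux_abs_rpow_two_mul (σ : ℝ) (a : ℝ) : |a| ^ (2*σ) = (a^2) ^ σ := by
  rw [Real.rpow_mul (abs_nonneg a)]
  congr 1
  rw [show (2:ℝ) = ((2:ℕ):ℝ) by norm_num, Real.rpow_natCast, sq_abs]

lemma aux_key_lt {σ ξ : ℝ} (h1 : 1/2 < σ) (h2 : σ < 1) (hξ : ξ ≠ 0) :
    |ξ+1| ^ (2*σ) + |ξ-1| ^ (2*σ) < 2 * |ξ| ^ (2*σ) + 2 := by
  have hσ0 : 0 < σ := by linarith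
  rw [aux_abs_rpow_two_mul, aux_abs_rpow_two_mul, aux_abs_rpow_two_mul]
  have hmid := aux_midpoint_rpow hσ0.le h2.le (sq_nonneg (ξ+1)) (sq_nonneg (ξ-1))
  have e : ((ξ+1)^2 + (ξ-1)^2)/2 = ξ^2 + 1 := by ring
  rw [e] at hmid
  have hstrict := aux_rpow_add_one_lt hσ0 h2 (by positivity : (0:ℝ) < ξ^2)
  linarith

lemma aux_key_le {σ : ℝ} (h1 : 1/2 < σ) (h2 : σ < 1) (ξ : ℝ) :
    |ξ+1| ^ (2*σ) + |ξ-1| ^ (2*σ) ≤ 2 * |ξ| ^ (2*σ) + 2 := by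
  rcases eq_or_ne ξ 0 with rfl | hξ
  · have hσ0 : (2:ℝ)*σ ≠ 0 := by positivity
    norm_num [Real.zero_rpow hσ0, Real.one_rpow]
  · exact (aux_key_lt h1 h2 hξ).le

lemma aux_pOne_add_neg (σ ξ : ℝ) :
    pOne σ ξ + pOne σ (-ξ) = |ξ+1| ^ (2*σ) + |ξ-1| ^ (2*σ) - 2 := by
  unfold pOne
  have e : |-ξ + 1| = |ξ - 1| := by rw [show -ξ + 1 = -(ξ - 1) by ring, abs_neg]
  rw [e]; ring

lemma aux_pOne_growth {σ : ℝ} (h1 : 1/2 < σ) (h2 : σ < 1) (ξ : ℝ) :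
    |pOne σ ξ| ≤ 2 * (1 + |ξ|)^2 := by
  have hσ0 : 0 < σ := by linarith
  have habs : |ξ + 1| ≤ 1 + |ξ| := by
    calc |ξ + 1| ≤ |ξ| + |(1:ℝ)| := abs_add_le _ _
    _ = 1 + |ξ| := by rw [abs_one]; ring
  have hb : (1:ℝ) ≤ 1 + |ξ| := by simp [abs_nonneg]
  have hA0 : 0 ≤ |ξ + 1| ^ (2*σ) := Real.rpow_nonneg (abs_nonneg _) _
  have hA : |ξ + 1| ^ (2*σ) ≤ (1 + |ξ|)^2 := by
    calc |ξ + 1| ^ (2*σ) ≤ (1 + |ξ|) ^ (2*σ) :=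
          Real.rpow_le_rpow (abs_nonneg _) habs (by positivity)
    _ ≤ (1 + |ξ|) ^ ((2:ℕ):ℝ) := Real.rpow_le_rpow_of_exponent_le hb (by push_cast; linarith)
    _ = (1 + |ξ|) ^ (2:ℕ) := Real.rpow_natCast _ 2
  have h3 : -|ξ| ≤ ξ := neg_abs_le ξ
  have h4 : ξ ≤ |ξ| := le_abs_self ξ
  have h5 : 0 ≤ |ξ| := abs_nonneg ξ
  rw [abs_le]
  unfold pOne
  constructor <;> nlinarith

lemma aux_continuous_pOne {σ : ℝ} (hσ0 : 0 < σ) : Continuous (pOne σ) := by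
  have h1 : Continuous fun ξ : ℝ => |ξ + 1| ^ (2*σ) :=
    ((continuous_id.add continuous_const).abs).rpow_const (fun x => Or.inr (by positivity))
  exact (h1.sub continuous_const).sub (continuous_const.mul continuous_id)

lemma aux_continuous_abs_rpow {σ : ℝ} (hσ0 : 0 < σ) :
    Continuous fun ξ : ℝ => |ξ| ^ (2*σ) :=
  continuous_abs.rpow_const (fun x => Or.inr (by positivity))

lemma aux_abs_rpow_growth {σ : ℝ} (h1 : 1/2 < σ) (h2 : σ < 1) (ξ : ℝ) :
    |(|ξ| ^ (2*σ))| ≤ 2 * (1 + |ξ|)^2 := by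
  have hb : (1:ℝ) ≤ 1 + |ξ| := by simp [abs_nonneg]
  rw [abs_of_nonneg (Real.rpow_nonneg (abs_nonneg _) _)]
  calc |ξ| ^ (2*σ) ≤ (1 + |ξ|) ^ (2*σ) :=
        Real.rpow_le_rpow (abs_nonneg _) (by linarith [abs_nonneg ξ]) (by positivity)
  _ ≤ (1 + |ξ|) ^ ((2:ℕ):ℝ) := Real.rpow_le_rpow_of_exponent_le hb (by push_cast; linarith)
  _ = (1 + |ξ|) ^ (2:ℕ) := Real.rpow_natCast _ 2
  _ ≤ 2 * (1 + |ξ|)^2 := by nlinarith [sq_nonneg (1 + |ξ|)]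

lemma aux_integrable_weight (v : SchwartzMap ℝ ℂ) {w : ℝ → ℝ} (hw : Continuous w)
    (hC : ∀ ξ : ℝ, |w ξ| ≤ 2 * (1 + |ξ|)^2) :
    Integrable (fun ξ : ℝ => w ξ * ‖v ξ‖ ^ (2:ℕ)) := by
  obtain ⟨M, hMpos, hM⟩ := v.decay 0 0
  simp only [pow_zero, norm_iteratedFDeriv_zero, one_mul] at hM
  have hint : Integrable (fun ξ : ℝ =>
      (2*M) * (‖ξ‖^(0:ℕ)*‖v ξ‖ + (2*(‖ξ‖^(1:ℕ)*‖v ξ‖) + ‖ξ‖^(2:ℕ)*‖v ξ‖))) := by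
    exact ((v.integrable_pow_mul volume 0).add (((v.integrable_pow_mul volume 1).const_mul 2).add
      (v.integrable_pow_mul volume 2))).const_mul _
  refine hint.mono' ((hw.mul ((v.continuous.norm).pow 2)).aestronglyMeasurable) ?_
  filter_upwards with ξ
  have h1 : ‖v ξ‖ ≤ M := hM ξ
  have h2 : 0 ≤ ‖v ξ‖ := norm_nonneg _
  have h3 : 0 ≤ |ξ| := abs_nonneg ξ
  have h4 := hC ξ
  have h5 : 0 ≤ |w ξ| := abs_nonneg _
  rw [Real.norm_eq_abs, abs_mul, abs_of_nonneg (pow_nonneg h2 2), Real.norm_eq_abs]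
  have key : |w ξ| * ‖v ξ‖^2 ≤ (2 * (1+|ξ|)^2) * (M * ‖v ξ‖) := by
    apply mul_le_mul h4 _ (by positivity) (le_trans h5 h4)
    calc ‖v ξ‖^2 = ‖v ξ‖ * ‖v ξ‖ := sq ‖v ξ‖
    _ ≤ M * ‖v ξ‖ := mul_le_mul_of_nonneg_right h1 h2
  calc |w ξ| * ‖v ξ‖^2 ≤ (2 * (1+|ξ|)^2) * (M * ‖v ξ‖) := key
  _ = (2*M) * (|ξ|^(0:ℕ)*‖v ξ‖ + (2*(|ξ|^(1:ℕ)*‖v ξ‖) + |ξ|^(2:ℕ)*‖v ξ‖)) := by ring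

/-- For a nonzero Schwartz function `u` with even Fourier transform,
`‖𝒫₁^{1/2} u‖_{L²}² < ‖|∇|^σ u‖_{L²}²`, stated via the Fourier symbols. -/
theorem pOne_quadratic_form_lt (σ : ℝ) (hσ : σ ∈ Set.Ioo (1/2 : ℝ) 1)
    (u : SchwartzMap ℝ ℂ) (hu : u ≠ 0)
    (heven : ∀ ξ : ℝ, 𝓕 (⇑u) (-ξ) = 𝓕 (⇑u) ξ) :
    (∫ ξ : ℝ, pOne σ ξ * ‖𝓕 (⇑u) ξ‖ ^ (2 : ℕ)) <
      ∫ ξ : ℝ, |ξ| ^ (2*σ) * ‖𝓕 (⇑u) ξ‖ ^ (2 : ℕ) := by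
  obtain ⟨hσ1, hσ2⟩ := hσ
  have hσ0 : 0 < σ := by linarith
  set v : SchwartzMap ℝ ℂ := SchwartzMap.fourierTransformCLM ℂ u with hvdef
  have hvu : ⇑v = 𝓕 ⇑u := rfl
  rw [← hvu]
  have hvev : ∀ ξ : ℝ, v (-ξ) = v ξ := fun ξ => by rw [hvu]; exact heven ξ
  have hP : Integrable (fun ξ : ℝ => pOne σ ξ * ‖v ξ‖ ^ (2:ℕ)) :=
    aux_integrable_weight v (aux_continuous_pOne hσ0) (aux_pOne_growth hσ1 hσ2)
  have hPn : Integrable (fun ξ : ℝ => pOne σ (-ξ) * ‖v ξ‖ ^ (2:ℕ)) := by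
    refine aux_integrable_weight v ((aux_continuous_pOne hσ0).comp continuous_neg) ?_
    intro ξ
    have := aux_pOne_growth hσ1 hσ2 (-ξ)
    simpa [abs_neg] using this
  have hW : Integrable (fun ξ : ℝ => |ξ| ^ (2*σ) * ‖v ξ‖ ^ (2:ℕ)) :=
    aux_integrable_weight v (aux_continuous_abs_rpow hσ0) (aux_abs_rpow_growth hσ1 hσ2)
  have heq : ∫ ξ : ℝ, pOne σ (-ξ) * ‖v ξ‖ ^ (2:ℕ) = ∫ ξ : ℝ, pOne σ ξ * ‖v ξ‖ ^ (2:ℕ) := by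
    have e : (fun ξ : ℝ => pOne σ (-ξ) * ‖v ξ‖ ^ (2:ℕ))
        = fun ξ : ℝ => (fun t : ℝ => pOne σ t * ‖v t‖ ^ (2:ℕ)) (-ξ) := by
      funext ξ; simp only; rw [hvev]
    rw [e]
    exact MeasureTheory.integral_neg_eq_self (fun t : ℝ => pOne σ t * ‖v t‖ ^ (2:ℕ)) volume
  set d : ℝ → ℝ := fun ξ => 2*(|ξ| ^ (2*σ) * ‖v ξ‖ ^ (2:ℕ)) -
      (pOne σ ξ * ‖v ξ‖ ^ (2:ℕ) + pOne σ (-ξ) * ‖v ξ‖ ^ (2:ℕ)) with hddef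
  have hsymb_le : ∀ ξ : ℝ, pOne σ ξ + pOne σ (-ξ) ≤ 2 * |ξ| ^ (2*σ) := by
    intro ξ; rw [aux_pOne_add_neg]; linarith [aux_key_le hσ1 hσ2 ξ]
  have hsymb_lt : ∀ ξ : ℝ, ξ ≠ 0 → pOne σ ξ + pOne σ (-ξ) < 2 * |ξ| ^ (2*σ) := by
    intro ξ hξ; rw [aux_pOne_add_neg]; linarith [aux_key_lt hσ1 hσ2 hξ]
  have hd_nonneg : ∀ ξ, 0 ≤ d ξ := by
    intro ξ
    have h := hsymb_le ξ
    have hF : (0:ℝ) ≤ ‖v ξ‖ ^ (2:ℕ) := by positivity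
    simp only [hddef]
    nlinarith
  have hd_int : Integrable d := (hW.const_mul 2).sub (hP.add hPn)
  have hvne : ∃ x, v x ≠ 0 := by
    by_contra h
    push_neg at h
    apply hu
    have hv0 : SchwartzMap.fourierTransformCLE ℂ (SchwartzMap ℝ ℂ) u = 0 := by
      ext x
      exact h x
    exact (SchwartzMap.fourierTransformCLE ℂ (SchwartzMap ℝ ℂ)).injective (by rw [hv0, map_zero])
  obtain ⟨x, hx⟩ := hvne
  obtain ⟨ξ₀, hξ₀ne, hξ₀v⟩ : ∃ ξ₀ : ℝ, ξ₀ ≠ 0 ∧ v ξ₀ ≠ 0 := by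
    rcases ne_or_eq x 0 with h | rfl
    · exact ⟨x, h, hx⟩
    · have hU : {ξ : ℝ | v ξ ≠ 0} ∈ nhds (0:ℝ) :=
        (isOpen_compl_singleton.preimage v.continuous).mem_nhds hx
      have hU' : {ξ : ℝ | v ξ ≠ 0} ∩ {(0:ℝ)}ᶜ ∈ nhdsWithin (0:ℝ) {(0:ℝ)}ᶜ :=
        Filter.inter_mem (mem_nhdsWithin_of_mem_nhds hU) self_mem_nhdsWithin
      obtain ⟨ξ₀, h1, h2⟩ := Filter.nonempty_of_mem hU'
      exact ⟨ξ₀, h2, h1⟩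
  have hd_cont : Continuous d := by
    refine (continuous_const.mul ((aux_continuous_abs_rpow hσ0).mul ((v.continuous.norm).pow 2))).sub ?_
    exact ((aux_continuous_pOne hσ0).mul ((v.continuous.norm).pow 2)).add
      (((aux_continuous_pOne hσ0).comp continuous_neg).mul ((v.continuous.norm).pow 2))
  have hd_pos0 : 0 < d ξ₀ := by
    have h := hsymb_lt ξ₀ hξ₀ne
    have hF : (0:ℝ) < ‖v ξ₀‖ ^ (2:ℕ) := pow_pos (norm_pos_iff.2 hξ₀v) 2
    simp only [hddef]
    nlinarith
  have hpos : 0 < ∫ ξ, d ξ := by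
    rw [integral_pos_iff_support_of_nonneg hd_nonneg hd_int]
    have hopen : IsOpen {ξ : ℝ | 0 < d ξ} := isOpen_lt continuous_const hd_cont
    have hsub : {ξ : ℝ | 0 < d ξ} ⊆ Function.support d := fun ξ h => ne_of_gt h
    exact lt_of_lt_of_le (hopen.measure_pos volume ⟨ξ₀, hd_pos0⟩) (measure_mono hsub)
  have hi : ∫ ξ, d ξ = 2*(∫ ξ : ℝ, |ξ| ^ (2*σ) * ‖v ξ‖ ^ (2:ℕ)) -
      ((∫ ξ : ℝ, pOne σ ξ * ‖v ξ‖ ^ (2:ℕ)) + ∫ ξ : ℝ, pOne σ (-ξ) * ‖v ξ‖ ^ (2:ℕ)) := by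
    have hPadd : Integrable (fun ξ : ℝ => pOne σ ξ * ‖v ξ‖ ^ (2:ℕ) + pOne σ (-ξ) * ‖v ξ‖ ^ (2:ℕ)) :=
      hP.add hPn
    simp only [hddef]
    rw [integral_sub (hW.const_mul 2) hPadd, integral_add hP hPn, MeasureTheory.integral_const_mul]
  rw [hi, heq] at hpos
  linarith
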